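/- Let A be a finite abelian group, Q a strictly positive stochastic matrix on A, and for characters ξ, ζ of A with ζ nontrivial, define P_{ξ,ζ} = M_ξ ∘ Q ∘ M_ζ ∘ Q on ℂ^A, where M_χ is multiplication by χ and Q is the transition operator. Then the operator norm of P_{ξ,ζ} with respect to the sup-norm is strictly less than 1. -/

import Mathlib

/-- The transition operator of a stochastic matrix on `ℂ^A`. -/
noncomputable def transOp {A : Type*} [Fintype A] (q : A → A → ℝ) (φ : A → ℂ) : A → ℂ :=
  fun a => ∑ b, (q a b : ℂ) * φ b

/-- Multiplication by a character. -/
noncomputable def multOp {A : Type*} [AddCommGroup A] (χ : AddChar A ℂ) (φ : A → ℂ) : A → ℂ :=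
  fun a => χ a * φ a

open Complex Finset
lemma re_mul_conj_eq (x y : ℂ) : (x * (starRingEnd ℂ) y).re = (‖x‖^2 + ‖y‖^2 - ‖x - y‖^2)/2 := by
  simp only [Complex.sq_norm, Complex.normSq_apply, Complex.mul_re,
    Complex.conj_re, Complex.conj_im, Complex.sub_re, Complex.sub_im]
  ring

lemma sq_norm_wsum_le {A : Type*} [Fintype A] (w : A → ℝ) (hw : ∀ b, 0 ≤ w b)
    (hsum : ∑ b, w b = 1) (v : A → ℂ) (B : ℝ) (hv : ∀ b, ‖v b‖ ^ 2 ≤ B) (i j : A) :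
    ‖∑ b, (w b : ℂ) * v b‖ ^ 2 ≤ B - (1/2) * w i * w j * ‖v i - v j‖ ^ 2 := by
  set S := ∑ b, (w b : ℂ) * v b with hS
  have h1 : ‖S‖ ^ 2 = (S * (starRingEnd ℂ) S).re := by
    rw [Complex.mul_conj]
    simp [Complex.sq_norm]
  have h2 : S * (starRingEnd ℂ) S
      = ∑ b, ∑ c, ((w b * w c : ℝ) : ℂ) * (v b * (starRingEnd ℂ) (v c)) := by
    rw [hS, map_sum, Finset.sum_mul_sum]
    refine Finset.sum_congr rfl fun b _ => Finset.sum_congr rfl fun c _ => ?_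
    push_cast
    simp [mul_comm, mul_assoc, mul_left_comm]
  have h3 : ‖S‖ ^ 2 = ∑ b, ∑ c, w b * w c * ((‖v b‖^2 + ‖v c‖^2 - ‖v b - v c‖^2)/2) := by
    rw [h1, h2, Complex.re_sum]
    refine Finset.sum_congr rfl fun b _ => ?_
    rw [Complex.re_sum]
    refine Finset.sum_congr rfl fun c _ => ?_
    rw [Complex.re_ofReal_mul, re_mul_conj_eq]
  have hA : ∑ b, ∑ c, w b * w c * ((‖v b‖^2 + ‖v c‖^2)/2) ≤ B := by
    calc ∑ b, ∑ c, w b * w c * ((‖v b‖^2 + ‖v c‖^2)/2)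
        ≤ ∑ b, ∑ c, w b * w c * B := by
          refine Finset.sum_le_sum fun b _ => Finset.sum_le_sum fun c _ => ?_
          have := hv b; have := hv c
          have := mul_nonneg (hw b) (hw c)
          nlinarith
      _ = B := by
          simp only [← Finset.sum_mul, ← Finset.mul_sum, hsum]
          ring
  have hB : (1/2) * w i * w j * ‖v i - v j‖ ^ 2
      ≤ ∑ b, ∑ c, w b * w c * (‖v b - v c‖^2/2) := by
    have hnn : ∀ b c : A, 0 ≤ w b * w c * (‖v b - v c‖^2/2) := fun b c =>
      mul_nonneg (mul_nonneg (hw b) (hw c)) (by positivity)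
    calc (1/2) * w i * w j * ‖v i - v j‖ ^ 2 = w i * w j * (‖v i - v j‖^2/2) := by ring
      _ ≤ ∑ c, w i * w c * (‖v i - v c‖^2/2) :=
          Finset.single_le_sum (fun c _ => hnn i c) (Finset.mem_univ j)
      _ ≤ ∑ b, ∑ c, w b * w c * (‖v b - v c‖^2/2) :=
          Finset.single_le_sum (fun b _ => Finset.sum_nonneg fun c _ => hnn b c)
            (Finset.mem_univ i)
  have hsplit : ∑ b, ∑ c, w b * w c * ((‖v b‖^2 + ‖v c‖^2 - ‖v b - v c‖^2)/2)
      = (∑ b, ∑ c, w b * w c * ((‖v b‖^2 + ‖v c‖^2)/2))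
        - ∑ b, ∑ c, w b * w c * (‖v b - v c‖^2/2) := by
    rw [← Finset.sum_sub_distrib]
    refine Finset.sum_congr rfl fun b _ => ?_
    rw [← Finset.sum_sub_distrib]
    exact Finset.sum_congr rfl fun c _ => by ring
  rw [h3, hsplit]
  linarith

set_option maxHeartbeats 2000000 in
/-- For a strictly positive stochastic matrix `Q` on a finite abelian group `A`
and characters `ξ`, `ζ` of `A` with `ζ` nontrivial, the operator
`P = M_ξ ∘ Q ∘ M_ζ ∘ Q` on `(ℂ^A, ‖·‖_∞)` has operator norm strictly less
than 1. -/
theorem operator_norm_lt_one (A : Type*) [AddCommGroup A] [Fintype A]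
    (q : A → A → ℝ) (hqpos : ∀ a b, 0 < q a b) (hqrow : ∀ a, ∑ b, q a b = 1)
    (ξ ζ : AddChar A ℂ) (hζ : ζ ≠ 1) :
    ∃ c : ℝ, c < 1 ∧ ∀ φ : A → ℂ,
      (⨆ a, ‖multOp ξ (transOp q (multOp ζ (transOp q φ))) a‖) ≤ c * ⨆ a, ‖φ a‖ := by
  classical
  -- the minimum entry of q
  obtain ⟨⟨a₁, b₁⟩, hmin⟩ := Finite.exists_min (fun p : A × A => q p.1 p.2)
  set ε := q a₁ b₁ with hεdef
  have hε : 0 < ε := hqpos a₁ b₁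
  have hεle : ∀ a b, ε ≤ q a b := fun a b => hmin (a, b)
  have hε1 : ε ≤ 1 := by
    have h := Finset.single_le_sum (f := fun b => q a₁ b)
      (fun b _ => (hqpos a₁ b).le) (Finset.mem_univ b₁)
    rw [hqrow a₁] at h
    exact le_trans (le_refl ε) h
  clear_value ε
  -- a point where ζ is nontrivial
  obtain ⟨b₀, hb₀⟩ := AddChar.ne_one_iff.mp hζ
  set δ := ‖(1 : ℂ) - ζ b₀‖ with hδdef
  have hδ : 0 < δ := by
    rw [hδdef, norm_pos_iff, sub_ne_zero]
    exact fun h => hb₀ h.symm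
  have hδ2 : δ ≤ 2 := by
    calc ‖(1 : ℂ) - ζ b₀‖ ≤ ‖(1 : ℂ)‖ + ‖ζ b₀‖ := norm_sub_le _ _
      _ = 2 := by rw [AddChar.norm_apply]; norm_num
  clear_value δ
  set κ := ε ^ 2 * δ ^ 2 / 32 with hκdef
  have hκpos : 0 < κ := by positivity
  have he2 : ε ^ 2 ≤ 1 := by nlinarith
  have hdd2 : δ ^ 2 ≤ 4 := by nlinarith
  have hκ1 : κ < 1 := by
    rw [hκdef]
    nlinarith [mul_le_mul he2 hdd2 (by positivity : (0:ℝ) ≤ δ ^ 2) (by norm_num : (0:ℝ) ≤ 1)]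
  clear_value κ
  refine ⟨Real.sqrt (1 - κ), ?_, ?_⟩
  · have : Real.sqrt (1 - κ) < Real.sqrt 1 := by
      apply Real.sqrt_lt_sqrt (by linarith) (by linarith)
    simpa using this
  intro φ
  have hne : Nonempty A := ⟨0⟩
  -- M, the sup norm of φ
  obtain ⟨c₀, hc₀⟩ := Finite.exists_max (fun a => ‖φ a‖)
  set M := ⨆ a, ‖φ a‖ with hMdef
  have hMeq : M = ‖φ c₀‖ := by
    refine le_antisymm (ciSup_le hc₀) (le_ciSup (f := fun a => ‖φ a‖) (Set.Finite.bddAbove (Set.finite_range _)) c₀)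
  have hφM : ∀ a, ‖φ a‖ ≤ M := fun a => hMeq ▸ hc₀ a
  have hM0 : 0 ≤ M := le_trans (norm_nonneg _) (hφM c₀)
  clear_value M
  -- d, the diameter of φ
  obtain ⟨⟨c₁, c₂⟩, hdmax⟩ := Finite.exists_max (fun p : A × A => ‖φ p.1 - φ p.2‖)
  set d := ‖φ c₁ - φ c₂‖ with hddef
  have hd0 : 0 ≤ d := norm_nonneg _
  have hdle : ∀ x y, ‖φ x - φ y‖ ≤ d := fun x y => hdmax (x, y)
  clear_value d
  set ψ := transOp q φ with hψdef
  clear_value ψ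
  -- ψ is close to φ c₀
  have hs2 : ∀ b, ‖ψ b - φ c₀‖ ≤ d := by
    intro b
    have hrw : ψ b - φ c₀ = ∑ c, (q b c : ℂ) * (φ c - φ c₀) := by
      simp only [hψdef, transOp, mul_sub, Finset.sum_sub_distrib, ← Finset.sum_mul]
      have : (∑ c, (q b c : ℂ)) = 1 := by
        rw [← Complex.ofReal_sum, hqrow b]; norm_num
      rw [this, one_mul]
    rw [hrw]
    calc ‖∑ c, (q b c : ℂ) * (φ c - φ c₀)‖ ≤ ∑ c, ‖(q b c : ℂ) * (φ c - φ c₀)‖ :=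
          norm_sum_le _ _
      _ ≤ ∑ c, q b c * d := by
          refine Finset.sum_le_sum fun c _ => ?_
          rw [norm_mul, Complex.norm_real, Real.norm_of_nonneg (hqpos b c).le]
          exact mul_le_mul_of_nonneg_left (hdle c c₀) (hqpos b c).le
      _ = d := by rw [← Finset.sum_mul, hqrow b, one_mul]
  -- ψ is uniformly contracted
  have hs3 : ∀ b, ‖ψ b‖ ^ 2 ≤ M ^ 2 - (1/2) * ε^2 * d^2 := by
    intro b
    have h := sq_norm_wsum_le (q b) (fun c => (hqpos b c).le) (hqrow b) φ (M ^ 2)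
      (fun c => by nlinarith [hφM c, norm_nonneg (φ c)]) c₁ c₂
    have hq1 := hεle b c₁
    have hq2 := hεle b c₂
    rw [← hddef] at h
    rw [hψdef]
    simp only [transOp]
    nlinarith [h, sq_nonneg d, mul_le_mul hq1 hq2 hε.le ((hqpos b c₁).le),
      mul_le_mul_of_nonneg_right
        (mul_le_mul hq1 hq2 hε.le ((hqpos b c₁).le)) (sq_nonneg d)]
  -- the main pointwise bound
  have hkey : ∀ a, ‖∑ b, (q a b : ℂ) * (ζ b * ψ b)‖ ^ 2 ≤ (1 - κ) * M ^ 2 := by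
    intro a
    have h4 := sq_norm_wsum_le (q a) (fun c => (hqpos a c).le) (hqrow a)
      (fun b => ζ b * ψ b) (M ^ 2 - (1/2) * ε^2 * d^2)
      (fun b => by rw [norm_mul, AddChar.norm_apply, one_mul]; exact hs3 b) 0 b₀
    have hq1 := hεle a 0
    have hq2 := hεle a b₀
    have hz0 : ζ (0 : A) = 1 := AddChar.map_zero_eq_one ζ
    rw [hz0, one_mul] at h4
    set t := ‖ψ 0 - ζ b₀ * ψ b₀‖ with htdef
    have ht0 : 0 ≤ t := norm_nonneg _
    clear_value t
    -- t ≥ δ M - 2d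
    have hs5 : δ * M - 2 * d ≤ t := by
      have hid : ((1 : ℂ) - ζ b₀) * φ c₀
          = (ψ 0 - ζ b₀ * ψ b₀) - (ψ 0 - φ c₀) + ζ b₀ * (ψ b₀ - φ c₀) := by ring
      have h1 : δ * M = ‖((1 : ℂ) - ζ b₀) * φ c₀‖ := by
        rw [norm_mul, ← hMeq, hδdef]
      have h2 : ‖((1 : ℂ) - ζ b₀) * φ c₀‖ ≤ t + d + d := by
        rw [hid]
        calc ‖(ψ 0 - ζ b₀ * ψ b₀) - (ψ 0 - φ c₀) + ζ b₀ * (ψ b₀ - φ c₀)‖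
            ≤ ‖(ψ 0 - ζ b₀ * ψ b₀) - (ψ 0 - φ c₀)‖ + ‖ζ b₀ * (ψ b₀ - φ c₀)‖ :=
              norm_add_le _ _
          _ ≤ (‖ψ 0 - ζ b₀ * ψ b₀‖ + ‖ψ 0 - φ c₀‖) + ‖ζ b₀ * (ψ b₀ - φ c₀)‖ := by
              gcongr; exact norm_sub_le _ _
          _ ≤ t + d + d := by
              rw [norm_mul, AddChar.norm_apply, one_mul]
              exact add_le_add (add_le_add htdef.ge (hs2 0)) (hs2 b₀)
      linarith
    -- case split
    rcases le_or_gt (δ * M / 4) d with hcase | hcase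
    · -- large diameter
      have hterm : 0 ≤ 1/2 * q a 0 * q a b₀ * t^2 := by
        have h1 := (hqpos a 0).le
        have h2 := (hqpos a b₀).le
        positivity
      have hmain : ‖∑ b, (q a b : ℂ) * (ζ b * ψ b)‖ ^ 2
          ≤ M ^ 2 - (1/2) * ε^2 * d^2 := by linarith
      have hd2 : (δ * M / 4)^2 ≤ d^2 := pow_le_pow_left₀ (by positivity) hcase 2
      rw [hκdef]
      nlinarith [hmain, mul_le_mul_of_nonneg_left hd2 (sq_nonneg ε)]
    · -- nearly constant: t is large
      have ht : δ * M / 2 ≤ t := by linarith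
      have hqq : ε^2 * t^2 ≤ q a 0 * q a b₀ * t^2 :=
        mul_le_mul_of_nonneg_right
          (by rw [pow_two]; exact mul_le_mul hq1 hq2 hε.le ((hqpos a 0).le)) (sq_nonneg t)
      have hmain : ‖∑ b, (q a b : ℂ) * (ζ b * ψ b)‖ ^ 2
          ≤ M ^ 2 - (1/2) * ε^2 * t^2 := by
        nlinarith [h4, hqq, mul_nonneg (sq_nonneg ε) (sq_nonneg d)]
      have ht2 : (δ * M / 2)^2 ≤ t^2 := pow_le_pow_left₀ (by positivity) ht 2
      rw [hκdef]
      nlinarith [hmain, mul_le_mul_of_nonneg_left ht2 (sq_nonneg ε)]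
  -- conclude
  refine ciSup_le fun a => ?_
  have hnorm : ‖multOp ξ (transOp q (multOp ζ ψ)) a‖
      = ‖∑ b, (q a b : ℂ) * (ζ b * ψ b)‖ := by
    simp [multOp, transOp, norm_mul, AddChar.norm_apply]
  rw [hnorm]
  have h1 : ‖∑ b, (q a b : ℂ) * (ζ b * ψ b)‖ ≤ Real.sqrt ((1 - κ) * M ^ 2) := by
    rw [Real.le_sqrt (norm_nonneg _)]
    · exact hkey a
    · nlinarith [sq_nonneg M]
  calc ‖∑ b, (q a b : ℂ) * (ζ b * ψ b)‖ ≤ Real.sqrt ((1 - κ) * M ^ 2) := h1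
    _ = Real.sqrt (1 - κ) * M := by
        rw [Real.sqrt_mul (by nlinarith) _, Real.sqrt_sq hM0]
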